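/- The polynomial 41177889x⁴ + 7867012x³ + 33058502x² + 7867012x + 41177889 is a reciprocal (palindromic) polynomial, its leading coefficient factors as 3⁴·23²·31², and it is irreducible over ℚ. -/

import Mathlib

open Polynomial

/-- No rational number squares to 8181720914329600. -/
lemma no_rat_sq (t : ℚ) : t ^ 2 ≠ (8181720914329600 : ℚ) := by
  intro h
  have hden : (t.den : ℚ) ≠ 0 := by exact_mod_cast t.den_nz
  have h2 : (t.num : ℚ) ^ 2 = 8181720914329600 * (t.den : ℚ) ^ 2 := by
    rw [← Rat.num_div_den t] at h
    field_simp at h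
    linear_combination h
  have h3 : t.num ^ 2 = 8181720914329600 * (t.den : ℤ) ^ 2 := by exact_mod_cast h2
  have hcop : IsCoprime (t.num) (t.den : ℤ) := by
    rw [Int.isCoprime_iff_gcd_eq_one]
    exact t.reduced
  have hdvd : ((t.den : ℤ)) ^ 2 ∣ t.num ^ 2 := ⟨8181720914329600, by linear_combination h3⟩
  have hunit : IsUnit ((t.den : ℤ) ^ 2) :=
    (hcop.pow (n := 2) (m := 2)).isUnit_of_dvd' hdvd dvd_rfl
  have hd1 : (t.den : ℤ) ^ 2 = 1 := by
    rcases Int.isUnit_iff.mp hunit with h' | h'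
    · exact h'
    · nlinarith [sq_nonneg (t.den : ℤ)]
  have h4 : t.num ^ 2 = 8181720914329600 := by rw [h3, hd1]; ring
  have h5 : (t.num.natAbs) ^ 2 = 8181720914329600 := by
    have := Int.natAbs_pow t.num 2
    omega
  set m := t.num.natAbs with hm
  have : m ≤ 90452865 ∨ 90452866 ≤ m := by omega
  rcases this with h6 | h6
  · nlinarith [h5]
  · nlinarith [h5]

theorem period_polynomial_properties :
    let P : Polynomial ℚ :=
      C 41177889 * X ^ 4 + C 7867012 * X ^ 3 + C 33058502 * X ^ 2 +
        C 7867012 * X + C 41177889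
    (∀ i : ℕ, i ≤ 4 → P.coeff i = P.coeff (4 - i)) ∧
    P.leadingCoeff = 3 ^ 4 * 23 ^ 2 * 31 ^ 2 ∧
    Irreducible P := by
  intro P
  have hPdef : P = C 41177889 * X ^ 4 + C 7867012 * X ^ 3 + C 33058502 * X ^ 2 +
      C 7867012 * X + C 41177889 := rfl
  have hcoeff : ∀ k : ℕ, P.coeff k =
      if k = 0 then 41177889 else if k = 1 then 7867012 else if k = 2 then 33058502
      else if k = 3 then 7867012 else if k = 4 then 41177889 else 0 := by
    intro k
    rw [hPdef]
    rcases Nat.lt_or_ge k 5 with hk | hk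
    · interval_cases k <;>
        simp [coeff_add, coeff_C_mul, coeff_X_pow, coeff_C, coeff_X]
    · have h0 : k ≠ 0 := by omega
      have h1 : k ≠ 1 := by omega
      have h2 : k ≠ 2 := by omega
      have h3 : k ≠ 3 := by omega
      have h4 : k ≠ 4 := by omega
      simp [coeff_add, coeff_C_mul, coeff_X_pow, coeff_C, coeff_X, h0, h1, h2, h3, h4]
      omega
  have hdeg : P.natDegree = 4 := by
    rw [hPdef]; compute_degree!
  have hP0 : P ≠ 0 := by
    intro h
    have := hcoeff 4
    rw [h] at this
    simp at this
  -- no rational roots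
  have hnoroot : ∀ x : ℚ, P.eval x ≠ 0 := by
    intro x hx
    rw [hPdef] at hx
    simp only [eval_add, eval_mul, eval_pow, eval_C, eval_X] at hx
    nlinarith [sq_nonneg (2*41177889*x^2 + 7867012*x - 41177889),
      sq_nonneg (2*12165701595626252*x + 6*41177889*7867012), hx]
  refine ⟨?_, ?_, ?_⟩
  · intro i hi
    interval_cases i <;> simp [hcoeff]
  · have hl : P.leadingCoeff = P.coeff 4 := by rw [Polynomial.leadingCoeff, hdeg]
    rw [hl, hcoeff]; norm_num
  · rw [irreducible_iff]
    constructor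
    · intro hu
      have := natDegree_eq_zero_of_isUnit hu
      omega
    · intro f g hfg
      by_contra hcon
      push_neg at hcon
      obtain ⟨huf, hug⟩ := hcon
      have hf0 : f ≠ 0 := by rintro rfl; simp at hfg; exact hP0 (by rw [hfg])
      have hg0 : g ≠ 0 := by rintro rfl; simp at hfg; exact hP0 (by rw [hfg])
      have hdsum : f.natDegree + g.natDegree = 4 := by
        rw [← natDegree_mul hf0 hg0, ← hfg, hdeg]
      have hfne : f.natDegree ≠ 0 := by
        intro h
        apply huf
        rw [Polynomial.eq_C_of_natDegree_eq_zero h]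
        exact isUnit_C.mpr (isUnit_iff_ne_zero.mpr (fun hc => hf0 (by
          rw [Polynomial.eq_C_of_natDegree_eq_zero h, hc, map_zero])))
      have hgne : g.natDegree ≠ 0 := by
        intro h
        apply hug
        rw [Polynomial.eq_C_of_natDegree_eq_zero h]
        exact isUnit_C.mpr (isUnit_iff_ne_zero.mpr (fun hc => hg0 (by
          rw [Polynomial.eq_C_of_natDegree_eq_zero h, hc, map_zero])))
      -- helper: a natDegree-1 factor gives a root
      have hlin : ∀ u v : ℚ[X], P = u * v → u.natDegree = 1 → False := by
        intro u v huv h1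
        have hu0 : u ≠ 0 := fun h => by simp [h] at huv; exact hP0 huv
        have hc1 : u.coeff 1 ≠ 0 := by
          rw [← h1]; exact mt leadingCoeff_eq_zero.mp hu0
        have hue : u = C (u.coeff 1) * X + C (u.coeff 0) :=
          Polynomial.eq_X_add_C_of_natDegree_le_one (by omega)
        have : P.eval (-(u.coeff 0) / u.coeff 1) = 0 := by
          rw [huv, eval_mul]
          have : u.eval (-(u.coeff 0) / u.coeff 1) = 0 := by
            rw [hue]; simp; field_simp; ring
          rw [this, zero_mul]
        exact hnoroot _ this
      rcases (by omega : f.natDegree = 1 ∧ g.natDegree = 3 ∨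
          f.natDegree = 2 ∧ g.natDegree = 2 ∨ f.natDegree = 3 ∧ g.natDegree = 1)
        with ⟨h1, _⟩ | ⟨hf2, hg2⟩ | ⟨_, h1⟩
      · exact hlin f g hfg h1
      swap
      · exact hlin g f (by rwa [mul_comm] at hfg) h1
      -- main case: two quadratics
      have he0 : f.coeff 2 ≠ 0 := by
        rw [← hf2]; exact mt leadingCoeff_eq_zero.mp hf0
      have hh0 : g.coeff 2 ≠ 0 := by
        rw [← hg2]; exact mt leadingCoeff_eq_zero.mp hg0
      have hfz : ∀ k, 2 < k → f.coeff k = 0 := fun k hk =>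
        coeff_eq_zero_of_natDegree_lt (by omega)
      have hgz : ∀ k, 2 < k → g.coeff k = 0 := fun k hk =>
        coeff_eq_zero_of_natDegree_lt (by omega)
      set e := f.coeff 2 with he
      set f1 := f.coeff 1 with hf1
      set f0 := f.coeff 0 with hff0
      set h2 := g.coeff 2 with hh2
      set g1 := g.coeff 1 with hg1
      set g0 := g.coeff 0 with hgg0
      have hck : ∀ k : ℕ, P.coeff k = (f * g).coeff k := fun k => by rw [hfg]
      have expand : ∀ k : ℕ, (f * g).coeff k =
          ∑ j ∈ Finset.range (k + 1), f.coeff j * g.coeff (k - j) := by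
        intro k
        rw [Polynomial.coeff_mul, Finset.Nat.sum_antidiagonal_eq_sum_range_succ_mk]
      have E0 : f0 * g0 = 41177889 := by
        have := hck 0; rw [expand, hcoeff] at this
        simpa [Finset.sum_range_succ] using this.symm
      have E1 : f0 * g1 + f1 * g0 = 7867012 := by
        have := hck 1; rw [expand, hcoeff] at this
        simpa [Finset.sum_range_succ] using this.symm
      have E2 : f0 * h2 + f1 * g1 + e * g0 = 33058502 := by
        have := hck 2; rw [expand, hcoeff] at this
        simp [Finset.sum_range_succ] at this
        linarith
      have E3 : f1 * h2 + e * g1 = 7867012 := by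
        have := hck 3; rw [expand, hcoeff] at this
        simp [Finset.sum_range_succ, hfz 3 (by norm_num), hgz 3 (by norm_num)] at this
        linarith
      have E4 : e * h2 = 41177889 := by
        have := hck 4; rw [expand, hcoeff] at this
        simp [Finset.sum_range_succ, hfz 3 (by norm_num), hgz 3 (by norm_num),
          hfz 4 (by norm_num), hgz 4 (by norm_num)] at this
        linarith
      -- normalized variables
      set p := f1 / e with hp
      set q := f0 / e with hqd
      set r := g1 / h2 with hr
      set s := g0 / h2 with hs
      have hqs : q * s = 1 := by
        rw [hqd, hs]; field_simp; linear_combination E0 - E4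
      have hA1 : 41177889 * (p + r) = 7867012 := by
        rw [hp, hr]; field_simp; linear_combination 41177889 * E3 - 7867012 * E4
      have hA3 : 41177889 * (p * s + q * r) = 7867012 := by
        rw [hp, hqd, hr, hs]; field_simp; linear_combination 41177889 * E1 - 7867012 * E4
      have hA2 : 41177889 * (q + s + p * r) = 33058502 := by
        rw [hp, hqd, hr, hs]; field_simp; linear_combination 41177889 * E2 - 33058502 * E4
      have key : (q - 1) * (p - q * r) = 0 := by
        linear_combination (q / 41177889) * hA1 - (q / 41177889) * hA3 + p * hqs
      rcases mul_eq_zero.mp key with hq1 | hpq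
      · -- q = 1, s = 1: discriminant must be a rational square
        have hs1 : s - 1 = 0 := by linear_combination hqs - s * hq1
        have hpr : 41177889 * (p * r) = -49297276 := by
          linear_combination hA2 - 41177889 * hq1 - 41177889 * hs1
        have ht : (41177889 * (p - r)) ^ 2 = 8181720914329600 := by
          linear_combination (41177889 * (p + r) + 7867012) * hA1 - 4 * 41177889 * hpr
        exact no_rat_sq _ ht
      · -- p = q * r: resolvent quartic has a rational root, but it is positive definite
        have hA1' : 41177889 * (q * r + r) = 7867012 := by
          linear_combination hA1 - 41177889 * hpq
        have hA2' : 41177889 * (q + s + q * r ^ 2) = 33058502 := by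
          linear_combination hA2 - 41177889 * r * hpq
        have hR : 1695618542496321 * q ^ 4 + 2029957759130364 * q ^ 3 +
            730568311076230 * q ^ 2 + 2029957759130364 * q + 1695618542496321 = 0 := by
          linear_combination (41177889 * q * (q + 1) ^ 2) * hA2' -
            (q ^ 2 * (41177889 * r * (q + 1) + 7867012)) * hA1' -
            (41177889 ^ 2 * (q + 1) ^ 2) * hqs
        nlinarith [hR,
          sq_nonneg (2 * 1695618542496321 * q ^ 2 + 2029957759130364 * q - 1661706171646395),
          sq_nonneg (2 * 12104811382727541718202957078004 * q + 20514522740519726630293148838936)]
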